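/- Let i-MARK(S,D) be given with s = max S, let n ∈ ℕ be a starting position, let σ and σ' be guess seeds for n, and let c ≥ s. If the guess sequences satisfy 𝒢_σ(m) = 𝒢_{σ'}(m) for all m with n+c ≤ m < n+c+s, then 𝒢_σ(m) = 𝒢_{σ'}(m) for all m ≥ n+c. -/
import Mathlib


/-- The minimum excludant of a set of naturals. -/
noncomputable def mex (T : Set ℕ) : ℕ := sInf {k : ℕ | k ∉ T}

/-- The set of followers of position `n` in the game i-MARK(S,D):
`n - s` for `s ∈ S` with `0 < s ≤ n`, and `n / d` for `d ∈ D` with `2 ≤ d`, `0 < n`, `d ∣ n`. -/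
def followers (S D : Finset ℕ) (n : ℕ) : Finset ℕ :=
  ((S.filter fun s => 0 < s ∧ s ≤ n).image fun s => n - s) ∪
  ((D.filter fun d => 2 ≤ d ∧ 0 < n ∧ d ∣ n).image fun d => n / d)

theorem followers_lt {S D : Finset ℕ} {n m : ℕ} (h : m ∈ followers S D n) : m < n := by
  simp only [followers, Finset.mem_union, Finset.mem_image, Finset.mem_filter] at h
  rcases h with ⟨s, ⟨-, hs, hsn⟩, rfl⟩ | ⟨d, ⟨-, hd, hn, -⟩, rfl⟩
  · omega
  · exact Nat.div_lt_self hn (by omega)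

/-- The Sprague–Grundy function of i-MARK(S,D). -/
noncomputable def grundy (S D : Finset ℕ) : ℕ → ℕ
  | n => mex ↑((followers S D n).attach.image fun m => grundy S D m.1)
decreasing_by exact followers_lt m.2

/-- The number of followers of position `n` in i-MARK(S,D) (for positive `S` and `D` with
elements `≥ 2`): `φ(0) = 0` and `φ(n) = #{s ∈ S : s ≤ n} + #{d ∈ D : d ∣ n}` for `n > 0`. -/
def numFollowers (S D : Finset ℕ) (n : ℕ) : ℕ :=
  if n = 0 then 0 else (S.filter fun s => s ≤ n).card + (D.filter fun d => d ∣ n).card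

/-- `σ : ℕ → ℕ` is a guess seed for starting position `n` in i-MARK(S,D) if
`σ i ≤ φ(i)` for all `n ≤ i < n + max S` (values of `σ` outside this window are irrelevant). -/
def IsGuessSeed (S D : Finset ℕ) (n : ℕ) (σ : ℕ → ℕ) : Prop :=
  ∀ i, n ≤ i → i < n + S.sup id → σ i ≤ numFollowers S D i

/-- The guess sequence generated by seed `σ` from starting position `n`: it equals `σ` on
`[n, n + max S)`, and from `n + max S` on it is computed by the mex rule, using guessed values
for subtraction followers and true Grundy values for division followers. -/
noncomputable def guessSeq (S D : Finset ℕ) (n : ℕ) (σ : ℕ → ℕ) : ℕ → ℕ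
  | m =>
    if m < n + S.sup id then σ m
    else
      mex ((↑((S.filter fun t => 0 < t ∧ t ≤ m).attach.image
              fun t => guessSeq S D n σ (m - t.1)) : Set ℕ) ∪
        {g | ∃ d ∈ D, 2 ≤ d ∧ 0 < m ∧ d ∣ m ∧ g = grundy S D (m / d)})
decreasing_by
  have ht := t.2
  simp only [Finset.mem_filter] at ht
  omega

/-- Convergence occurs in `c` steps at starting position `n`: any two guess sequences from `n`
agree on all positions `m` with `n + c ≤ m < n + c + max S`. -/
def ConvergesIn (S D : Finset ℕ) (n c : ℕ) : Prop :=
  ∀ σ σ' : ℕ → ℕ, IsGuessSeed S D n σ → IsGuessSeed S D n σ' →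
    ∀ m, n + c ≤ m → m < n + c + S.sup id → guessSeq S D n σ m = guessSeq S D n σ' m

/-- If two guess sequences for starting position `n` in i-MARK(S,D) agree on a window of
`s = max S` consecutive positions `[n+c, n+c+s)` with `c ≥ s`, then they agree everywhere
from `n + c` on. -/
theorem guess_agree_forever (S D : Finset ℕ) (hS : S.Nonempty) (hSpos : ∀ s ∈ S, 0 < s)
    (hD : ∀ d ∈ D, 2 ≤ d) (n c : ℕ) (hc : S.sup id ≤ c)
    (σ σ' : ℕ → ℕ) (hσ : IsGuessSeed S D n σ) (hσ' : IsGuessSeed S D n σ')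
    (hagree : ∀ m, n + c ≤ m → m < n + c + S.sup id →
      guessSeq S D n σ m = guessSeq S D n σ' m) :
    ∀ m, n + c ≤ m → guessSeq S D n σ m = guessSeq S D n σ' m := by
  intro m
  induction m using Nat.strong_induction_on with
  | _ m ih =>
    intro hm
    by_cases hw : m < n + c + S.sup id
    · exact hagree m hm hw
    · have hns : ¬ m < n + S.sup id := by omega
      rw [guessSeq, guessSeq, if_neg hns, if_neg hns]
      have himg : (S.filter fun t => 0 < t ∧ t ≤ m).attach.image
            (fun t => guessSeq S D n σ (m - t.1)) =
          (S.filter fun t => 0 < t ∧ t ≤ m).attach.image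
            (fun t => guessSeq S D n σ' (m - t.1)) := by
        apply Finset.image_congr
        intro t _
        have ht := t.2
        simp only [Finset.mem_filter] at ht
        have hle : t.1 ≤ S.sup id := Finset.le_sup (f := id) ht.1
        exact ih (m - t.1) (by omega) (by omega)
      rw [himg]
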